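/- Every finite nonempty pure d-dimensional simplicial complex in ℝ^d (a finite collection of nondegenerate d-simplices with pairwise disjoint interiors, glued facet-to-facet) contains a simplex having at least one (d−1)-facet that is not shared with any other simplex of the collection. -/

import Mathlib

open scoped Classical

/-- A nondegenerate `d`-simplex in `ℝ^d`, given by its vertex set. -/
def IsSimplex (d : ℕ) (V : Finset (EuclideanSpace ℝ (Fin d))) : Prop :=
  V.card = d + 1 ∧
    AffineIndependent ℝ (fun x : V => (x : EuclideanSpace ℝ (Fin d)))

noncomputable section ExposedFacetAux

open MeasureTheory

variable {E : Type*} [NormedAddCommGroup E] [NormedSpace ℝ E]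

lemma mem_convexHull_of_weights (G : Finset E) (w : E → ℝ) (h0 : ∀ x ∈ G, 0 ≤ w x)
    (h1 : ∑ x ∈ G, w x = 1) : ∑ x ∈ G, w x • x ∈ convexHull ℝ (G : Set E) := by
  rw [Finset.convexHull_eq]
  exact ⟨w, h0, h1, by rw [Finset.centerMass_eq_of_sum_1 _ id h1]; rfl⟩

section Basis
variable (V : Finset E) (b : AffineBasis ↥V ℝ E) (hb : ∀ i : ↥V, b i = ↑i)

/-- The barycentric weight of `y` at a putative vertex `x`. -/
def wt (y : E) (x : E) : ℝ := if h : x ∈ V then b.coord ⟨x, h⟩ y else 0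

lemma wt_coe (y : E) (i : ↥V) : wt V b y ↑i = b.coord i y := by
  simp [wt, i.2]

lemma sum_wt (y : E) : ∑ x ∈ V, wt V b y x = 1 := by
  rw [← Finset.sum_coe_sort V (wt V b y)]
  simp only [wt_coe]
  exact b.sum_coord_apply_eq_one y

include hb in
lemma comb_wt (y : E) : ∑ x ∈ V, wt V b y x • x = y := by
  rw [← Finset.sum_coe_sort V (fun x => wt V b y x • x)]
  simp only [wt_coe]
  have h1 := b.sum_coord_apply_eq_one y
  have h2 := b.affineCombination_coord_eq_self y
  rw [Finset.univ.affineCombination_eq_linear_combination _ _ h1] at h2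
  calc ∑ i : ↥V, b.coord i y • (↑i : E) = ∑ i : ↥V, b.coord i y • b i := by simp [hb]
  _ = y := h2

include hb in
lemma mem_convexHull_of_wt_nonneg (y : E) (h : ∀ x ∈ V, 0 ≤ wt V b y x) :
    y ∈ convexHull ℝ (V : Set E) := by
  have := mem_convexHull_of_weights V _ h (sum_wt V b y)
  rwa [comb_wt V b hb y] at this

include hb in
lemma wt_nonneg_of_mem (y : E) (h : y ∈ convexHull ℝ (V : Set E)) (x : E) : 0 ≤ wt V b y x := by
  by_cases hx : x ∈ V
  · rw [Finset.convexHull_eq] at h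
    obtain ⟨w, h0, h1, h2⟩ := h
    rw [Finset.centerMass_eq_of_sum_1 _ id h1] at h2
    have hsum : ∑ i : ↥V, w ↑i = 1 := by rw [Finset.sum_coe_sort]; exact h1
    have hy : y = (Finset.univ.affineCombination ℝ ⇑b) (fun i : ↥V => w ↑i) := by
      rw [Finset.univ.affineCombination_eq_linear_combination _ _ hsum]
      rw [← h2]
      rw [← Finset.sum_coe_sort V (fun x => w x • id x)]
      simp [hb]
    have hc := b.coord_apply_combination_of_mem (Finset.mem_univ (⟨x, hx⟩ : ↥V)) hsum
    rw [← hy] at hc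
    rw [wt, dif_pos hx, hc]
    exact h0 x hx
  · simp [wt, hx]

include hb in
lemma mem_convexHull_subset_of_wt (y : E) (G : Finset E) (hG : G ⊆ V)
    (h0 : ∀ x ∈ V, 0 ≤ wt V b y x) (hz : ∀ x ∈ V, x ∉ G → wt V b y x = 0) :
    y ∈ convexHull ℝ (G : Set E) := by
  have hsum : ∑ x ∈ G, wt V b y x = 1 := by
    rw [Finset.sum_subset hG (fun x hx hxG => hz x hx hxG)]
    exact sum_wt V b y
  have hcomb : ∑ x ∈ G, wt V b y x • x = y := by
    rw [Finset.sum_subset hG (fun x hx hxG => by rw [hz x hx hxG, zero_smul])]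
    exact comb_wt V b hb y
  have := mem_convexHull_of_weights G _ (fun x hx => h0 x (hG hx)) hsum
  rwa [hcomb] at this

lemma continuous_wt (x : E) [FiniteDimensional ℝ E] :
    Continuous (fun y : E => wt V b y x) := by
  by_cases hx : x ∈ V
  · simp only [wt, dif_pos hx]
    exact (b.coord ⟨x, hx⟩).continuous_of_finiteDimensional
  · simp only [wt, dif_neg hx]
    exact continuous_const

end Basis

lemma basis_of_isSimplex {d : ℕ} {V : Finset (EuclideanSpace ℝ (Fin d))} (h : IsSimplex d V) :
    ∃ b : AffineBasis ↥V ℝ (EuclideanSpace ℝ (Fin d)),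
      ∀ i : ↥V, b i = (↑i : EuclideanSpace ℝ (Fin d)) := by
  refine ⟨⟨fun i => ↑i, h.2, ?_⟩, fun _ => rfl⟩
  rw [h.2.affineSpan_eq_top_iff_card_eq_finrank_add_one]
  simp [finrank_euclideanSpace_fin, h.1]

lemma affineSpan_ne_top_of_card_lt [FiniteDimensional ℝ E] (G : Finset E)
    (h : G.card < Module.finrank ℝ E) : affineSpan ℝ (G : Set E) ≠ ⊤ := by
  intro htop
  rcases G.eq_empty_or_nonempty with rfl | hGne
  · simp at htop
  · have hcard : G.card = (G.card - 1) + 1 := (Nat.succ_pred_eq_of_pos hGne.card_pos).symm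
    have hle := finrank_vectorSpan_image_finset_le ℝ (id : E → E) G hcard
    rw [Finset.image_id] at hle
    have hdir : vectorSpan ℝ (G : Set E) = ⊤ := by
      rw [← direction_affineSpan, htop]
      exact AffineSubspace.direction_top ℝ E E
    rw [hdir, finrank_top] at hle
    omega

end ExposedFacetAux

/-- Abbreviation for the ambient space. -/
abbrev EdSp (d : ℕ) := EuclideanSpace ℝ (Fin d)

set_option maxHeartbeats 2000000

open MeasureTheory

/-- Every finite nonempty pure `d`-dimensional simplicial complex in `ℝ^d` contains a
simplex with an exposed `(d-1)`-facet: a facet shared with no other simplex. -/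
theorem exposed_facet_exists (d : ℕ) (S : Finset (Finset (EuclideanSpace ℝ (Fin d))))
    (hne : S.Nonempty)
    (hsimp : ∀ V ∈ S, IsSimplex d V)
    (hdisj : ∀ V ∈ S, ∀ W ∈ S, V ≠ W →
      Disjoint (interior (convexHull ℝ (V : Set (EuclideanSpace ℝ (Fin d)))))
        (interior (convexHull ℝ (W : Set (EuclideanSpace ℝ (Fin d))))))
    (hface : ∀ V ∈ S, ∀ W ∈ S, V ≠ W →
      convexHull ℝ (V : Set (EuclideanSpace ℝ (Fin d))) ∩
          convexHull ℝ (W : Set (EuclideanSpace ℝ (Fin d))) =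
        convexHull ℝ ((V ∩ W : Finset (EuclideanSpace ℝ (Fin d))) :
          Set (EuclideanSpace ℝ (Fin d)))) :
    ∃ V ∈ S, ∃ F ⊆ V, F.card = d ∧ ∀ W ∈ S, W ≠ V → ¬ F ⊆ W := by
  classical
  -- dimension facts
  have hfr : Module.finrank ℝ (EdSp d) = d := finrank_euclideanSpace_fin
  -- trivial case d = 0
  rcases Nat.eq_zero_or_pos d with hd0 | hd
  · subst hd0
    obtain ⟨V, hV⟩ := hne
    refine ⟨V, hV, ∅, Finset.empty_subset V, Finset.card_empty, ?_⟩
    intro W hW hWV _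
    apply hWV
    obtain ⟨a, ha⟩ := Finset.card_eq_one.mp (hsimp W hW).1
    obtain ⟨c, hc⟩ := Finset.card_eq_one.mp (hsimp V hV).1
    have hac : a = c := by ext i; exact i.elim0
    rw [ha, hc, hac]
  -- bad small faces
  set 𝒢 : Finset (Finset (EdSp d)) :=
    (S.biUnion fun V => V.powerset).filter (fun G => G.Nonempty ∧ G.card < d) with h𝒢def
  have h𝒢span : ∀ G ∈ 𝒢, affineSpan ℝ (G : Set (EdSp d)) ≠ ⊤ := by
    intro G hG
    have := (Finset.mem_filter.mp hG).2.2
    exact affineSpan_ne_top_of_card_lt G (by rw [hfr]; exact this)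
  set B : Set (EdSp d) := ⋃ G ∈ (𝒢 : Set (Finset (EdSp d))),
    (affineSpan ℝ (G : Set (EdSp d)) : Set (EdSp d)) with hBdef
  have hB : volume B = 0 := by
    rw [hBdef]
    refine (measure_biUnion_null_iff (μ := volume) 𝒢.countable_toSet).mpr ?_
    intro G hG
    exact Measure.addHaar_affineSubspace volume _ (h𝒢span G hG)
  -- choose the generic base point x₀
  obtain ⟨V₀, hV₀⟩ := hne
  obtain ⟨b₀, hb₀⟩ := basis_of_isSimplex (hsimp V₀ hV₀)
  have hrange : Set.range ⇑b₀ = (V₀ : Set (EdSp d)) := by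
    ext x
    constructor
    · rintro ⟨i, rfl⟩; rw [hb₀]; exact i.2
    · intro hx; exact ⟨⟨x, hx⟩, hb₀ _⟩
  have hO : (interior (convexHull ℝ (V₀ : Set (EdSp d)))).Nonempty := by
    rw [← hrange]
    exact ⟨_, b₀.centroid_mem_interior_convexHull⟩
  have hOB : ¬ (interior (convexHull ℝ (V₀ : Set (EdSp d))) ⊆ B) := by
    intro h
    have h1 : 0 < volume (interior (convexHull ℝ (V₀ : Set (EdSp d)))) :=
      isOpen_interior.measure_pos volume hO
    have h2 := measure_mono (μ := (volume : MeasureTheory.Measure (EdSp d))) h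
    rw [hB] at h2
    exact absurd (le_antisymm h2 (zero_le')) (ne_of_gt h1)
  obtain ⟨x₀, hx₀O, hx₀B⟩ := Set.not_subset.mp hOB
  -- choose the generic direction u
  set pick : Finset (EdSp d) → EdSp d := fun G => if h : G.Nonempty then h.choose else 0
    with hpickdef
  have hpick : ∀ G ∈ 𝒢, pick G ∈ G := by
    intro G hG
    have hGne : G.Nonempty := (Finset.mem_filter.mp hG).2.1
    simp only [hpickdef, dif_pos hGne]
    exact hGne.choose_spec
  set WG : Finset (EdSp d) → Submodule ℝ (EdSp d) :=
    fun G => vectorSpan ℝ (G : Set (EdSp d)) ⊔ (ℝ ∙ (x₀ - pick G)) with hWGdef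
  have hWGne : ∀ G ∈ 𝒢, WG G ≠ ⊤ := by
    intro G hG htop
    simp only [hWGdef] at htop
    have h1 : Module.finrank ℝ (vectorSpan ℝ (G : Set (EdSp d))) ≤ G.card - 1 := by
      have hGne : G.Nonempty := (Finset.mem_filter.mp hG).2.1
      have hcard : G.card = (G.card - 1) + 1 := (Nat.succ_pred_eq_of_pos hGne.card_pos).symm
      have := finrank_vectorSpan_image_finset_le ℝ (id : EdSp d → EdSp d) G hcard
      rwa [Finset.image_id] at this
    have h2 : Module.finrank ℝ (ℝ ∙ (x₀ - pick G)) ≤ 1 := by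
      rcases eq_or_ne (x₀ - pick G) 0 with h | h
      · rw [h, Submodule.span_zero_singleton]; simp
      · rw [finrank_span_singleton h]
    have hcard := (Finset.mem_filter.mp hG).2.2
    have h3 : d ≤ G.card - 1 + 1 := by
      calc d = Module.finrank ℝ (EdSp d) := hfr.symm
      _ = Module.finrank ℝ (⊤ : Submodule ℝ (EdSp d)) := (finrank_top ℝ (EdSp d)).symm
      _ = Module.finrank ℝ (↥(vectorSpan ℝ (G : Set (EdSp d)) ⊔ (ℝ ∙ (x₀ - pick G)))) := by
          rw [htop]
      _ ≤ Module.finrank ℝ (↥(vectorSpan ℝ (G : Set (EdSp d)))) +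
            Module.finrank ℝ (↥(ℝ ∙ (x₀ - pick G))) :=
          Submodule.finrank_add_le_finrank_add_finrank _ _
      _ ≤ (G.card - 1) + 1 := add_le_add h1 h2
    have hpos : 0 < G.card := (Finset.mem_filter.mp hG).2.1.card_pos
    omega
  set Bad : Set (EdSp d) := (⋃ G ∈ (𝒢 : Set (Finset (EdSp d))), (WG G : Set (EdSp d))) ∪
      ((⊥ : Submodule ℝ (EdSp d)) : Set (EdSp d)) with hBaddef
  have hBad : volume Bad = 0 := by
    rw [hBaddef]
    refine measure_union_null ?_ ?_
    · refine (measure_biUnion_null_iff (μ := volume) 𝒢.countable_toSet).mpr ?_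
      intro G hG
      exact Measure.addHaar_submodule volume _ (hWGne G hG)
    · refine Measure.addHaar_submodule volume _ ?_
      intro h
      have : Module.finrank ℝ (⊥ : Submodule ℝ (EdSp d)) = d := by rw [h, finrank_top, hfr]
      simp at this
      omega
  have hBaduniv : ¬ (Set.univ ⊆ Bad) := by
    intro h
    have h1 : 0 < volume (Set.univ : Set (EdSp d)) :=
      isOpen_univ.measure_pos volume ⟨0, trivial⟩
    have h2 := measure_mono (μ := (volume : MeasureTheory.Measure (EdSp d))) h
    rw [hBad] at h2
    exact absurd (le_antisymm h2 (zero_le')) (ne_of_gt h1)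
  obtain ⟨u, -, hu⟩ := Set.not_subset.mp hBaduniv
  have hu0 : u ≠ 0 := by
    intro h
    exact hu (Set.mem_union_right _ (by rw [h]; exact Submodule.zero_mem _))
  have huG : ∀ G ∈ 𝒢, u ∉ WG G := by
    intro G hG hmem
    exact hu (Set.mem_union_left _ (Set.mem_biUnion hG hmem))
  -- the line avoids all low-dimensional faces
  have hline : ∀ G ∈ 𝒢, ∀ t : ℝ, x₀ + t • u ∉ (affineSpan ℝ (G : Set (EdSp d)) :
      Set (EdSp d)) := by
    intro G hG t hmem
    have haG : pick G ∈ affineSpan ℝ (G : Set (EdSp d)) :=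
      subset_affineSpan ℝ _ (Finset.mem_coe.mpr (hpick G hG))
    have ht : t ≠ 0 := by
      rintro rfl
      rw [zero_smul, add_zero] at hmem
      exact hx₀B (Set.mem_biUnion hG hmem)
    have h1 : (x₀ + t • u) - pick G ∈ vectorSpan ℝ (G : Set (EdSp d)) := by
      have := AffineSubspace.vsub_mem_direction hmem haG
      rwa [direction_affineSpan] at this
    have h2 : x₀ - pick G ∈ WG G :=
      Submodule.mem_sup_right (Submodule.mem_span_singleton_self _)
    have h3 : t • u ∈ WG G := by
      have h4 : ((x₀ + t • u) - pick G) - (x₀ - pick G) ∈ WG G :=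
        sub_mem (Submodule.mem_sup_left h1) h2
      have h5 : ((x₀ + t • u) - pick G) - (x₀ - pick G) = t • u := by abel
      rwa [h5] at h4
    have h6 : u ∈ WG G := by
      have := (WG G).smul_mem t⁻¹ h3
      rwa [smul_smul, inv_mul_cancel₀ ht, one_smul] at this
    exact huG G hG h6
  have hlineconv : ∀ V ∈ S, ∀ G ⊆ V, G.card < d → ∀ t : ℝ,
      x₀ + t • u ∉ convexHull ℝ (G : Set (EdSp d)) := by
    intro V hV G hGV hcard t hmem
    rcases G.eq_empty_or_nonempty with rfl | hGne
    · simp at hmem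
    · have hG𝒢 : G ∈ 𝒢 := by
        rw [h𝒢def, Finset.mem_filter]
        exact ⟨Finset.mem_biUnion.mpr ⟨V, hV, Finset.mem_powerset.mpr hGV⟩, hGne, hcard⟩
      exact hline G hG𝒢 t (convexHull_subset_affineSpan _ hmem)
  -- the union of the complex and the exit time of the generic ray
  set U : Set (EdSp d) := ⋃ V ∈ (S : Set (Finset (EdSp d))), convexHull ℝ (V : Set (EdSp d))
    with hUdef
  have hUmem : ∀ V ∈ S, convexHull ℝ (V : Set (EdSp d)) ⊆ U := by
    intro V hV
    rw [hUdef]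
    intro x hx
    exact Set.mem_biUnion hV hx
  have hUcomp : IsCompact U := by
    rw [hUdef]
    exact S.finite_toSet.isCompact_biUnion (fun V _ => V.finite_toSet.isCompact_convexHull ℝ)
  have hUclosed : IsClosed U := hUcomp.isClosed
  obtain ⟨R, hR⟩ := hUcomp.isBounded.subset_closedBall (0 : EdSp d)
  have hcontline : Continuous (fun t : ℝ => x₀ + t • u) :=
    continuous_const.add (continuous_id.smul continuous_const)
  set C : Set ℝ := {t : ℝ | x₀ + t • u ∈ U} with hCdef
  have hCclosed : IsClosed C := hUclosed.preimage hcontline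
  have hC0 : (0 : ℝ) ∈ C := by
    rw [hCdef]
    simp only [Set.mem_setOf_eq, zero_smul, add_zero]
    exact hUmem V₀ hV₀ (interior_subset hx₀O)
  have hupos : 0 < ‖u‖ := norm_pos_iff.mpr hu0
  have hCbdd : BddAbove C := by
    refine ⟨(R + ‖x₀‖) / ‖u‖, fun t ht => ?_⟩
    have h1 : x₀ + t • u ∈ Metric.closedBall (0 : EdSp d) R := hR ht
    rw [Metric.mem_closedBall, dist_zero_right] at h1
    have h2 : ‖t • u‖ ≤ R + ‖x₀‖ := by
      have h3 : t • u = (x₀ + t • u) - x₀ := by abel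
      rw [h3]
      calc ‖(x₀ + t • u) - x₀‖ ≤ ‖x₀ + t • u‖ + ‖x₀‖ := norm_sub_le _ _
      _ ≤ R + ‖x₀‖ := by linarith
    rw [norm_smul, Real.norm_eq_abs] at h2
    calc t ≤ |t| := le_abs_self t
    _ ≤ (R + ‖x₀‖) / ‖u‖ := by
        rw [le_div_iff₀ hupos]
        exact h2
  set T : ℝ := sSup C with hTdef
  have hTC : T ∈ C := hCclosed.csSup_mem ⟨0, hC0⟩ hCbdd
  have hTmax : ∀ t ∈ C, t ≤ T := fun t ht => le_csSup hCbdd ht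
  set xs : EdSp d := x₀ + T • u with hxsdef
  have hxsU : xs ∈ U := hTC
  rw [hUdef] at hxsU
  obtain ⟨V, hV, hxsV⟩ := Set.mem_iUnion₂.mp hxsU
  obtain ⟨b, hb⟩ := basis_of_isSimplex (hsimp V hV)
  have hcard : V.card = d + 1 := (hsimp V hV).1
  have hnn : ∀ x : EdSp d, 0 ≤ wt V b xs x := wt_nonneg_of_mem V b hb xs hxsV
  -- the coordinate functions along the line are continuous
  have hcontwt : ∀ x : EdSp d, Continuous (fun t : ℝ => wt V b (x₀ + t • u) x) :=
    fun x => (continuous_wt V b x).comp hcontline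
  -- at most one barycentric coordinate of `xs` vanishes
  set Z : Finset (EdSp d) := V.filter (fun x => wt V b xs x = 0) with hZdef
  set Gs : Finset (EdSp d) := V.filter (fun x => ¬ wt V b xs x = 0) with hGsdef
  have hGsV : Gs ⊆ V := Finset.filter_subset _ _
  have hxsGs : xs ∈ convexHull ℝ (Gs : Set (EdSp d)) := by
    refine mem_convexHull_subset_of_wt V b hb xs Gs hGsV (fun x _ => hnn x) ?_
    intro x hx hxGs
    by_contra h
    exact hxGs (Finset.mem_filter.mpr ⟨hx, h⟩)
  have hGscard : d ≤ Gs.card := by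
    by_contra h
    exact hlineconv V hV Gs hGsV (not_le.mp h) T hxsGs
  have hZGs : Z.card + Gs.card = V.card :=
    Finset.card_filter_add_card_filter_not (s := V) (p := fun x => wt V b xs x = 0)
  have hZcard : Z.card ≤ 1 := by omega
  rcases Nat.le_one_iff_eq_zero_or_eq_one.mp hZcard with hZ0 | hZ1
  · -- no vanishing coordinate: the ray continues strictly beyond `T`, contradiction
    rw [Finset.card_eq_zero] at hZ0
    have hpos : ∀ x ∈ V, 0 < wt V b xs x := by
      intro x hx
      rcases (hnn x).lt_or_eq with h | h
      · exact h
      · exfalso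
        have hxZ : x ∈ Z := Finset.mem_filter.mpr ⟨hx, h.symm⟩
        rw [hZ0] at hxZ
        exact absurd hxZ (Finset.notMem_empty x)
    have hev : ∀ᶠ t in nhdsWithin T (Set.Ioi T), ∀ x ∈ V, 0 < wt V b (x₀ + t • u) x := by
      refine Filter.Eventually.filter_mono nhdsWithin_le_nhds ?_
      rw [Finset.eventually_all]
      intro x hx
      exact ((hcontwt x).tendsto T).eventually (eventually_gt_nhds (hpos x hx))
    obtain ⟨t, ht, htT⟩ := (hev.and eventually_mem_nhdsWithin).exists
    have htC : t ∈ C := by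
      rw [hCdef]
      exact hUmem V hV (mem_convexHull_of_wt_nonneg V b hb _
        (fun x hx => le_of_lt (ht x hx)))
    exact absurd (hTmax t htC) (not_le.mpr htT)
  · -- exactly one vanishing coordinate: its facet is exposed
    obtain ⟨v', hv'eq⟩ := Finset.card_eq_one.mp hZ1
    have hv'Z : v' ∈ Z := hv'eq ▸ Finset.mem_singleton_self v'
    have hv'V : v' ∈ V := (Finset.mem_filter.mp hv'Z).1
    have hv'0 : wt V b xs v' = 0 := (Finset.mem_filter.mp hv'Z).2
    set i₀ : ↥V := (⟨v', hv'V⟩ : ↥V) with hi₀def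
    have hwt_i₀ : ∀ y : EdSp d, wt V b y v' = b.coord i₀ y := by
      intro y
      rw [wt, dif_pos hv'V]
    set F : Finset (EdSp d) := V.erase v' with hFdef
    have hFV : F ⊆ V := Finset.erase_subset _ _
    have hFcard : F.card = d := by
      rw [hFdef, Finset.card_erase_of_mem hv'V, hcard]
      omega
    have hFpos : ∀ x ∈ F, 0 < wt V b xs x := by
      intro x hx
      obtain ⟨hxv, hxV⟩ := Finset.mem_erase.mp hx
      rcases (hnn x).lt_or_eq with h | h
      · exact h
      · exfalso
        have : x ∈ Z := Finset.mem_filter.mpr ⟨hxV, h.symm⟩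
        rw [hv'eq, Finset.mem_singleton] at this
        exact hxv this
    have hcoordF : ∀ x ∈ F, b.coord i₀ x = 0 := by
      intro x hx
      obtain ⟨hxv, hxV⟩ := Finset.mem_erase.mp hx
      have hne : i₀ ≠ (⟨x, hxV⟩ : ↥V) := by
        intro h
        exact hxv (congrArg Subtype.val h).symm
      have := b.coord_apply_ne hne
      rwa [hb ⟨x, hxV⟩] at this
    have hxsF : xs ∈ convexHull ℝ (F : Set (EdSp d)) := by
      refine mem_convexHull_subset_of_wt V b hb xs F hFV (fun x _ => hnn x) ?_
      intro x hx hxF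
      have hxv : x = v' := by
        by_contra h
        exact hxF (Finset.mem_erase.mpr ⟨h, hx⟩)
      rw [hxv]
      exact hv'0
    have hconvF0 : ∀ y ∈ convexHull ℝ (F : Set (EdSp d)), b.coord i₀ y = 0 := by
      intro y hy
      have hsub : (F : Set (EdSp d)) ⊆ (b.coord i₀) ⁻¹' ({0} : Set ℝ) := by
        intro x hx
        exact hcoordF x hx
      have hcvx : Convex ℝ ((b.coord i₀) ⁻¹' ({0} : Set ℝ)) :=
        (convex_singleton (0 : ℝ)).affine_preimage (b.coord i₀)
      exact convexHull_min hsub hcvx hy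
    refine ⟨V, hV, F, hFV, hFcard, ?_⟩
    intro W hW hWV hFW
    -- suppose the facet F is shared with W; derive a contradiction
    have hcardW : W.card = d + 1 := (hsimp W hW).1
    have hVW : V ≠ W := Ne.symm hWV
    obtain ⟨wpt, hwptWF⟩ : (W \ F).Nonempty := by
      rw [← Finset.card_pos, Finset.card_sdiff_of_subset hFW, hcardW, hFcard]
      omega
    have hwptW : wpt ∈ W := (Finset.mem_sdiff.mp hwptWF).1
    have hwptF : wpt ∉ F := (Finset.mem_sdiff.mp hwptWF).2
    have hWins : W = insert wpt F := by
      refine (Finset.eq_of_subset_of_card_le ?_ ?_).symm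
      · intro x hx
        rcases Finset.mem_insert.mp hx with rfl | hx
        · exact hwptW
        · exact hFW hx
      · rw [hcardW, Finset.card_insert_of_notMem hwptF, hFcard]
    have hv'W : v' ∉ W := by
      intro hv'W
      have hVsubW : V ⊆ W := by
        intro x hx
        rcases eq_or_ne x v' with rfl | hxv
        · exact hv'W
        · exact hFW (Finset.mem_erase.mpr ⟨hxv, hx⟩)
      exact hWV (Finset.eq_of_subset_of_card_le hVsubW (by omega)).symm
    have hVWF : V ∩ W = F := by
      apply Finset.Subset.antisymm
      · intro x hx
        obtain ⟨hxV, hxW⟩ := Finset.mem_inter.mp hx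
        refine Finset.mem_erase.mpr ⟨?_, hxV⟩
        rintro rfl
        exact hv'W hxW
      · exact Finset.subset_inter hFV hFW
    set βv : ℝ := b.coord i₀ wpt with hβvdef
    rcases lt_trichotomy βv 0 with hβvneg | hβv0 | hβvpos
    · -- the ray can cross the facet F into W: contradiction with maximality of T
      have hev : ∀ᶠ t in nhdsWithin T (Set.Ioi T), ∀ x ∈ F,
          0 < wt V b (x₀ + t • u) x ∧
          0 < wt V b (x₀ + t • u) x - wt V b (x₀ + t • u) v' * wt V b wpt x / βv := by
        refine Filter.Eventually.filter_mono nhdsWithin_le_nhds ?_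
        rw [Finset.eventually_all]
        intro x hx
        have hc1 : Continuous (fun t : ℝ => wt V b (x₀ + t • u) x) := hcontwt x
        have hc2 : Continuous (fun t : ℝ =>
            wt V b (x₀ + t • u) x - wt V b (x₀ + t • u) v' * wt V b wpt x / βv) :=
          hc1.sub (((hcontwt v').mul continuous_const).div_const βv)
        have he1 := ((hc1.tendsto T).eventually (eventually_gt_nhds (hFpos x hx)))
        have hval : wt V b xs x - wt V b xs v' * wt V b wpt x / βv = wt V b xs x := by
          rw [hv'0]
          ring
        have he2 := ((hc2.tendsto T).eventually (eventually_gt_nhds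
          (show (0 : ℝ) < wt V b xs x - wt V b xs v' * wt V b wpt x / βv by
            rw [hval]; exact hFpos x hx)))
        exact he1.and he2
      obtain ⟨t, ht, htT⟩ := (hev.and eventually_mem_nhdsWithin).exists
      set y : EdSp d := x₀ + t • u with hydef
      have hyU : y ∈ U := by
        rcases le_or_gt 0 (wt V b y v') with hv0 | hv0
        · -- still inside V
          refine hUmem V hV (mem_convexHull_of_wt_nonneg V b hb y ?_)
          intro x hx
          rcases eq_or_ne x v' with rfl | hxv
          · exact hv0
          · exact le_of_lt (ht x (Finset.mem_erase.mpr ⟨hxv, hx⟩)).1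
        · -- crossed into W
          set μ : ℝ := wt V b y v' / βv with hμdef
          have hμpos : 0 < μ := div_pos_of_neg_of_neg hv0 hβvneg
          have hβvne : βv ≠ 0 := ne_of_lt hβvneg
          have hμβv : μ * βv = wt V b y v' := div_mul_cancel₀ _ hβvne
          have hwtwpt : wt V b wpt v' = βv := hwt_i₀ wpt
          set ω : EdSp d → ℝ :=
            fun x => if x = wpt then μ else wt V b y x - μ * wt V b wpt x with hωdef
          have hωF : ∀ x ∈ F, ω x = wt V b y x - μ * wt V b wpt x := by
            intro x hx
            rw [hωdef]
            exact if_neg (by rintro rfl; exact hwptF hx)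
          have he1 : ∑ x ∈ F, wt V b y x = 1 - wt V b y v' := by
            have := Finset.sum_erase_add V (wt V b y) hv'V
            rw [sum_wt] at this
            rw [hFdef]
            linarith
          have he2 : ∑ x ∈ F, wt V b wpt x = 1 - βv := by
            have := Finset.sum_erase_add V (wt V b wpt) hv'V
            rw [sum_wt, hwtwpt] at this
            rw [hFdef]
            linarith
          have he3 : ∑ x ∈ F, wt V b y x • x = y - wt V b y v' • v' := by
            have h := Finset.sum_erase_add V (fun x => wt V b y x • x) hv'V
            rw [comb_wt V b hb] at h
            rw [hFdef, eq_sub_iff_add_eq]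
            exact h
          have he4 : ∑ x ∈ F, wt V b wpt x • x = wpt - βv • v' := by
            have h := Finset.sum_erase_add V (fun x => wt V b wpt x • x) hv'V
            rw [comb_wt V b hb] at h
            have h' : ∑ x ∈ V.erase v', wt V b wpt x • x + wt V b wpt v' • v' = wpt := h
            rw [hwtwpt] at h'
            rw [hFdef, eq_sub_iff_add_eq]
            exact h'
          have hωsum : ∑ x ∈ W, ω x = 1 := by
            rw [hWins, Finset.sum_insert hwptF, Finset.sum_congr rfl hωF,
              Finset.sum_sub_distrib, ← Finset.mul_sum, he1, he2]
            have hωw : ω wpt = μ := if_pos rfl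
            rw [hωw]
            have hexp : μ * (1 - βv) = μ - wt V b y v' := by
              rw [mul_sub, hμβv, mul_one]
            linarith
          have hωcomb : ∑ x ∈ W, ω x • x = y := by
            rw [hWins, Finset.sum_insert hwptF]
            have hstep : ∀ x ∈ F, ω x • x = wt V b y x • x - μ • (wt V b wpt x • x) := by
              intro x hx
              rw [hωF x hx, sub_smul, smul_smul]
            rw [Finset.sum_congr rfl hstep, Finset.sum_sub_distrib, ← Finset.smul_sum,
              he3, he4]
            have : ω wpt = μ := if_pos rfl
            rw [this, smul_sub, smul_smul, hμβv]
            abel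
          have hωnn : ∀ x ∈ W, 0 ≤ ω x := by
            intro x hx
            rw [hWins, Finset.mem_insert] at hx
            rcases hx with rfl | hx
            · rw [hωdef]
              simp only [if_pos rfl]
              exact le_of_lt hμpos
            · rw [hωF x hx]
              have h2 := (ht x hx).2
              have : μ * wt V b wpt x = wt V b y v' * wt V b wpt x / βv := by
                rw [hμdef]
                ring
              rw [this]
              linarith
          have : y ∈ convexHull ℝ (W : Set (EdSp d)) := by
            have := mem_convexHull_of_weights W ω hωnn hωsum
            rwa [hωcomb] at this
          exact hUmem W hW this
      have htC : t ∈ C := hyU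
      exact absurd (hTmax t htC) (not_le.mpr htT)
    · -- W would be degenerate: its vertices all lie in the hyperplane of F
      obtain ⟨bW, hbW⟩ := basis_of_isSimplex (hsimp W hW)
      have hv'top : v' ∈ affineSpan ℝ (Set.range ⇑bW) := by
        rw [bW.tot]
        exact AffineSubspace.mem_top ℝ _ v'
      obtain ⟨s, wgt, hswgt, hv'comb⟩ := eq_affineCombination_of_mem_affineSpan hv'top
      have happ := Finset.map_affineCombination s ⇑bW wgt hswgt (b.coord i₀)
      rw [← hv'comb] at happ
      have hzero : ∀ j ∈ s, (⇑(b.coord i₀) ∘ ⇑bW) j = 0 := by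
        rintro ⟨x, hxW⟩ _
        have hx' : x ∈ insert wpt F := by
          have h := hxW
          rw [hWins] at h
          exact h
        rw [Function.comp_apply, hbW ⟨x, hxW⟩]
        show b.coord i₀ x = 0
        rcases Finset.mem_insert.mp hx' with hj | hj
        · rw [hj, ← hβvdef, hβv0]
        · exact hcoordF _ hj
      rw [Finset.affineCombination_eq_linear_combination _ _ _ hswgt] at happ
      rw [Finset.sum_congr rfl (fun j hj => by rw [hzero j hj, smul_zero])] at happ
      have hone : b.coord i₀ v' = 1 := by
        have := b.coord_apply_eq i₀
        rwa [hb i₀] at this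
      rw [hone] at happ
      simp at happ
    · -- V and W would overlap near the facet F: contradiction with `hface`
      have hev : ∀ᶠ s in nhdsWithin (0 : ℝ) (Set.Ioi 0),
          (∀ x ∈ F, 0 < wt V b (AffineMap.lineMap xs wpt s) x) ∧ s < 1 := by
        refine Filter.Eventually.filter_mono nhdsWithin_le_nhds ?_
        refine Filter.Eventually.and ?_ (eventually_lt_nhds one_pos)
        rw [Finset.eventually_all]
        intro x hx
        have hcont : Continuous (fun s : ℝ => wt V b (AffineMap.lineMap xs wpt s) x) :=
          (continuous_wt V b x).comp
            (AffineMap.lineMap xs wpt : ℝ →ᵃ[ℝ] EdSp d).continuous_of_finiteDimensional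
        have h0 : wt V b (AffineMap.lineMap xs wpt (0 : ℝ)) x = wt V b xs x := by
          rw [AffineMap.lineMap_apply_zero]
        refine (hcont.tendsto 0).eventually (eventually_gt_nhds ?_)
        rw [h0]
        exact hFpos x hx
      obtain ⟨s, ⟨hsF, hs1⟩, hs0⟩ := (hev.and eventually_mem_nhdsWithin).exists
      set y : EdSp d := AffineMap.lineMap xs wpt s with hydef
      have hcoordy : b.coord i₀ y = s * βv := by
        rw [hydef, AffineMap.apply_lineMap, AffineMap.lineMap_apply_module]
        have h1 : b.coord i₀ xs = 0 := by rw [← hwt_i₀]; exact hv'0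
        rw [h1, ← hβvdef]
        simp [smul_eq_mul]
      have hyV : y ∈ convexHull ℝ (V : Set (EdSp d)) := by
        refine mem_convexHull_of_wt_nonneg V b hb y ?_
        intro x hx
        rcases eq_or_ne x v' with rfl | hxv
        · rw [hwt_i₀, hcoordy]
          exact le_of_lt (mul_pos (Set.mem_Ioi.mp hs0) hβvpos)
        · exact le_of_lt (hsF x (Finset.mem_erase.mpr ⟨hxv, hx⟩))
      have hyW : y ∈ convexHull ℝ (W : Set (EdSp d)) := by
        have hxsW : xs ∈ convexHull ℝ (W : Set (EdSp d)) :=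
          convexHull_mono (Finset.coe_subset.mpr hFW) hxsF
        have hwptW' : wpt ∈ convexHull ℝ (W : Set (EdSp d)) :=
          subset_convexHull ℝ _ (Finset.mem_coe.mpr hwptW)
        have hyform : y = (1 - s) • xs + s • wpt := by
          rw [hydef, AffineMap.lineMap_apply_module]
        rw [hyform]
        exact (convex_convexHull ℝ (W : Set (EdSp d))) hxsW hwptW'
          (by linarith) (le_of_lt hs0) (by ring)
      have hyF : y ∈ convexHull ℝ (F : Set (EdSp d)) := by
        have := hface V hV W hW hVW
        rw [← hVWF]
        rw [← this]
        exact ⟨hyV, hyW⟩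
      have := hconvF0 y hyF
      rw [hcoordy] at this
      exact absurd this (ne_of_gt (mul_pos (Set.mem_Ioi.mp hs0) hβvpos))
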